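/- Define f : ℝ × ℝ × ℂ → ℂ³ by f(x, y, ξ) = (ξ, x + i y, ρ(ξ, x + i y, x − i y)). Then: (a) f maps a neighborhood of the origin in ℝ² × ℂ into M; (b) f is injective; (c) at every point sufficiently near the origin the real Fréchet derivative of f is injective (f is a real-analytic immersion); and (d) for each fixed (x, y), the map ξ ↦ f(x, y, ξ) is holomorphic in ξ, so f is a CR map for the CR structure on ℝ² × ℂ spanned by ∂/∂ξ̄. Hence near each of its points M is the image of an open subset of ℝ² × ℂ under a real-analytic CR diffeomorphism onto its image. (Second assertion of Proposition 8.1.) -/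

import Mathlib

open Complex Filter Topology

noncomputable def gLin : (ℝ × ℝ × ℂ) →ₗ[ℝ] (ℂ × ℂ × ℂ) where
  toFun p := (p.2.2, (p.1 : ℂ) + (p.2.1 : ℂ) * I, (p.1 : ℂ) - (p.2.1 : ℂ) * I)
  map_add' p q := by
    simp only [Prod.fst_add, Prod.snd_add, Complex.ofReal_add, Prod.mk_add_mk]
    refine Prod.ext rfl (Prod.ext ?_ ?_) <;> dsimp <;> ring
  map_smul' r p := by
    refine Prod.ext rfl (Prod.ext ?_ ?_) <;>
      simp [Complex.real_smul, Prod.smul_fst, Prod.smul_snd] <;> push_cast <;> ring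

noncomputable def gC : (ℝ × ℝ × ℂ) →L[ℝ] (ℂ × ℂ × ℂ) := gLin.toContinuousLinearMap

@[simp] lemma gC_apply (p : ℝ × ℝ × ℂ) :
    gC p = (p.2.2, (p.1 : ℂ) + (p.2.1 : ℂ) * I, (p.1 : ℂ) - (p.2.1 : ℂ) * I) := rfl

theorem stmt10 (ρ : ℂ × ℂ × ℂ → ℂ)
    (hρ : ∀ᶠ x in 𝓝 (0 : ℂ × ℂ × ℂ), DifferentiableAt ℂ ρ x)
    (hρ0 : ρ 0 = 0) (hdρ0 : fderiv ℂ ρ 0 = 0)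
    (M : Set (ℂ × ℂ × ℂ))
    (hM : M = {p : ℂ × ℂ × ℂ | p.2.2 = ρ (p.1, p.2.1, starRingEnd ℂ p.2.1)})
    (f : ℝ × ℝ × ℂ → ℂ × ℂ × ℂ)
    (hf : ∀ (x y : ℝ) (ξ : ℂ),
      f (x, y, ξ) = (ξ, (x : ℂ) + (y : ℂ) * I, ρ (ξ, (x : ℂ) + (y : ℂ) * I, (x : ℂ) - (y : ℂ) * I))) :
    (∃ V ∈ 𝓝 (0 : ℝ × ℝ × ℂ), ∀ p ∈ V, f p ∈ M) ∧
    Function.Injective f ∧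
    (∀ᶠ p in 𝓝 (0 : ℝ × ℝ × ℂ),
      DifferentiableAt ℝ f p ∧ Function.Injective (fderiv ℝ f p)) ∧
    (∀ᶠ p in 𝓝 (0 : ℝ × ℝ × ℂ),
      DifferentiableAt ℂ (fun ξ : ℂ => f (p.1, p.2.1, ξ)) p.2.2) := by
  have hconj : ∀ x y : ℝ, starRingEnd ℂ ((x : ℂ) + (y : ℂ) * I) = (x : ℂ) - (y : ℂ) * I := by
    intro x y
    simp [map_add, map_mul, Complex.conj_ofReal, Complex.conj_I]
    ring
  -- eventual differentiability of ρ at gC p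
  have hg0 : gC (0 : ℝ × ℝ × ℂ) = 0 := map_zero gC
  have hev : ∀ᶠ p in 𝓝 (0 : ℝ × ℝ × ℂ), DifferentiableAt ℂ ρ (gC p) := by
    have := gC.continuous.tendsto (0 : ℝ × ℝ × ℂ)
    rw [hg0] at this
    exact this.eventually hρ
  have hfe : f = fun p : ℝ × ℝ × ℂ =>
      ((gC p).1, (gC p).2.1, ρ (gC p)) := by
    funext p
    obtain ⟨x, y, ξ⟩ := p
    simpa using hf x y ξ
  refine ⟨⟨Set.univ, Filter.univ_mem, ?_⟩, ?_, ?_, ?_⟩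
  · intro p _
    obtain ⟨x, y, ξ⟩ := p
    rw [hf, hM]
    simp only [Set.mem_setOf_eq]
    rw [hconj]
  · intro p q h
    obtain ⟨x, y, ξ⟩ := p
    obtain ⟨x', y', ξ'⟩ := q
    rw [hf, hf] at h
    simp only [Prod.mk.injEq] at h
    obtain ⟨h1, h2, -⟩ := h
    rw [Complex.ext_iff] at h2
    obtain ⟨hx, hy⟩ := by simpa using h2
    exact Prod.ext hx (Prod.ext hy h1)
  · filter_upwards [hev] with p hρ'
    have h1 : HasFDerivAt (fun q : ℝ × ℝ × ℂ => (gC q).1)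
        ((ContinuousLinearMap.fst ℝ ℂ (ℂ × ℂ)).comp gC) p :=
      (hasFDerivAt_fst).comp p gC.hasFDerivAt
    have h2 : HasFDerivAt (fun q : ℝ × ℝ × ℂ => (gC q).2.1)
        ((ContinuousLinearMap.fst ℝ ℂ ℂ).comp
          ((ContinuousLinearMap.snd ℝ ℂ (ℂ × ℂ)).comp gC)) p :=
      hasFDerivAt_fst.comp p (hasFDerivAt_snd.comp p gC.hasFDerivAt)
    have h3 : HasFDerivAt (fun q : ℝ × ℝ × ℂ => ρ (gC q))
        ((fderiv ℝ ρ (gC p)).comp gC) p := by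
      have := (hρ'.restrictScalars ℝ).hasFDerivAt
      exact this.comp p gC.hasFDerivAt
    have hF : HasFDerivAt f _ p := hfe ▸ (h1.prodMk (h2.prodMk h3))
    refine ⟨hF.differentiableAt, ?_⟩
    rw [hF.fderiv]
    intro v w hvw
    simp only [ContinuousLinearMap.prod_apply, ContinuousLinearMap.coe_comp',
      Function.comp_apply, ContinuousLinearMap.coe_fst', ContinuousLinearMap.coe_snd',
      gC_apply, Prod.mk.injEq] at hvw
    obtain ⟨ha, hb, -⟩ := hvw
    rw [Complex.ext_iff] at hb
    obtain ⟨hx, hy⟩ := by simpa using hb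
    exact Prod.ext hx (Prod.ext hy ha)
  · filter_upwards [hev] with p hρ'
    have heq : (fun ξ : ℂ => f (p.1, p.2.1, ξ)) = fun ξ : ℂ =>
        (ξ, (p.1 : ℂ) + (p.2.1 : ℂ) * I,
          ρ (ξ, (p.1 : ℂ) + (p.2.1 : ℂ) * I, (p.1 : ℂ) - (p.2.1 : ℂ) * I)) := by
      funext ξ; exact hf p.1 p.2.1 ξ
    rw [heq]
    have hinner : DifferentiableAt ℂ
        (fun ξ : ℂ => ρ (ξ, (p.1 : ℂ) + (p.2.1 : ℂ) * I, (p.1 : ℂ) - (p.2.1 : ℂ) * I))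
        p.2.2 := by
      have h0 : DifferentiableAt ℂ
          (fun ξ : ℂ => ((ξ, (p.1 : ℂ) + (p.2.1 : ℂ) * I, (p.1 : ℂ) - (p.2.1 : ℂ) * I) : ℂ × ℂ × ℂ))
          p.2.2 := differentiableAt_id.prodMk (differentiableAt_const _)
      have : gC p = (p.2.2, (p.1 : ℂ) + (p.2.1 : ℂ) * I, (p.1 : ℂ) - (p.2.1 : ℂ) * I) := rfl
      exact DifferentiableAt.comp p.2.2 (this ▸ hρ') h0
    exact differentiableAt_id.prodMk ((differentiableAt_const _).prodMk hinner)
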